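/- arXiv:1009.4889 — 2 statements merged into one kernel-verified Lean document; each statement's English description precedes it below -/
import Mathlib

section
/- Let m, n be positive integers, let x(t), y(t) ∈ K[[t]] with leading terms a·t^α and b·t^β respectively (a, b ∈ K*) such that α : β = n : m, and let f = f_d + f_{d+1} + … be the (n,m)-weighted homogeneous decomposition of f ∈ K[[x,y]] with f_d ≠ 0. Then ord f(x(t), y(t)) ≥ dα/n, with equality if and only if f_d(a,b) ≠ 0. -/
open MvPowerSeries MeasureTheory
open scoped Classical ENNReal

noncomputable section

variable {K : Type*} [Field K]

/-- The formal power series ring `K[[x,y]]`. -/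
abbrev PS (K : Type*) [Field K] : Type _ := MvPowerSeries (Fin 2) K

/-- The point of `ℝ²` corresponding to an exponent. -/
def rpt (α : Fin 2 →₀ ℕ) : ℝ × ℝ := ((α 0 : ℝ), (α 1 : ℝ))

/-- The point of `ℝ²` corresponding to a pair of naturals. -/
def npt (p : ℕ × ℕ) : ℝ × ℝ := ((p.1 : ℝ), (p.2 : ℝ))

/-- The support of `f`, as a subset of `ℝ²`. -/
def suppR (f : PS K) : Set (ℝ × ℝ) := rpt '' {α | MvPowerSeries.coeff (R := K) α f ≠ 0}

/-- The Newton polyhedron `Γ₊(f)`: the convex hull of `⋃_{α ∈ supp f} (α + ℝ²₊)`. -/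
def NewtonPolyhedron (f : PS K) : Set (ℝ × ℝ) :=
  convexHull ℝ (⋃ p ∈ suppR f, {q : ℝ × ℝ | p.1 ≤ q.1 ∧ p.2 ≤ q.2})

/-- Scalar product on `ℝ²`. -/
def dotp (w q : ℝ × ℝ) : ℝ := w.1 * q.1 + w.2 * q.2

/-- A (compact) face of the Newton polyhedron: the locus where some linear functional with
strictly positive coefficients attains its minimum on `Γ₊(f)`. -/
def IsFace (f : PS K) (Δ : Set (ℝ × ℝ)) : Prop :=
  Δ.Nonempty ∧ ∃ w : ℝ × ℝ, 0 < w.1 ∧ 0 < w.2 ∧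
    Δ = {q ∈ NewtonPolyhedron f | ∀ p ∈ NewtonPolyhedron f, dotp w q ≤ dotp w p}

/-- The Newton diagram `Γ(f)`: the union of the compact faces of `Γ₊(f)`. -/
def NewtonDiagram (f : PS K) : Set (ℝ × ℝ) := {q | ∃ Δ, IsFace f Δ ∧ q ∈ Δ}

/-- An edge (1-dimensional face) of the Newton diagram. -/
def IsEdge (f : PS K) (Δ : Set (ℝ × ℝ)) : Prop :=
  IsFace f Δ ∧ ∃ P Q : ℝ × ℝ, P ≠ Q ∧ Δ = segment ℝ P Q

/-- A vertex (0-dimensional face) of the Newton diagram. -/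
def IsVertexOf (f : PS K) (q : ℝ × ℝ) : Prop := IsFace f {q}

/-- `f` is convenient if its Newton diagram meets both coordinate axes. -/
def Convenient (f : PS K) : Prop :=
  (∃ p ∈ NewtonDiagram f, p.2 = 0) ∧ (∃ p ∈ NewtonDiagram f, p.1 = 0)

/-- `Γ₋(f)`: the union of all segments joining the origin to points of `Γ(f)`. -/
def GammaMinus (f : PS K) : Set (ℝ × ℝ) := ⋃ q ∈ NewtonDiagram f, segment ℝ (0, 0) q

/-- The region `ℝ²_{≥1}`. -/
def Rge1 : Set (ℝ × ℝ) := {p | 1 ≤ p.1 ∧ 1 ≤ p.2}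

/-- `Γ₁(f)`: the cone joining the origin with `Γ(f) ∩ ℝ²_{≥1}`. -/
def Gamma1 (f : PS K) : Set (ℝ × ℝ) := ⋃ q ∈ NewtonDiagram f ∩ Rge1, segment ℝ (0, 0) q

/-- Two-dimensional Euclidean volume (area). -/
def V2 (Q : Set (ℝ × ℝ)) : ℝ := (volume Q).toReal

/-- Sum of the one-dimensional volumes of the intersections with the coordinate axes. -/
def V1 (Q : Set (ℝ × ℝ)) : ℝ :=
  (volume {x : ℝ | (x, 0) ∈ Q}).toReal + (volume {y : ℝ | (0, y) ∈ Q}).toReal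

/-- The Newton number of a convenient power series `f ∈ m`:
`μ_N(f) = 2 V₂(Γ₋(f)) - V₁(Γ₋(f)) + 1` (the last term being `V₀`). -/
def muN (f : PS K) : ℝ := 2 * V2 (GammaMinus f) - V1 (GammaMinus f) + 1

/-- `f + x^m + y^m`. -/
def fplus (f : PS K) (m : ℕ) : PS K :=
  f + (MvPowerSeries.X 0) ^ m + (MvPowerSeries.X 1) ^ m

/-- The Newton number of an arbitrary `f ∈ m`, as the sup of `μ_N(f + x^m + y^m)`, `m ≥ 1`. -/
def muNE (f : PS K) : ℝ≥0∞ := ⨆ m : ℕ, ENNReal.ofReal (muN (fplus f (m + 1)))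

/-- Formal partial derivative of a power series in two variables. -/
def pd (i : Fin 2) (f : PS K) : PS K :=
  fun α => ((α i + 1 : ℕ) : K) * MvPowerSeries.coeff (R := K) (α + Finsupp.single i 1) f

/-- The Jacobian ideal `j(f)`. -/
def jacobianIdeal (f : PS K) : Ideal (PS K) := Ideal.span {pd 0 f, pd 1 f}

/-- The Milnor number `μ(f) = dim_K K[[x,y]]/j(f)`, as an extended real. -/
def milnor (f : PS K) : ℝ≥0∞ :=
  ((Cardinal.toENat (Module.rank K (PS K ⧸ jacobianIdeal f)) : ℕ∞) : ℝ≥0∞)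

/-- Evaluation of a power series with finitely many terms at a point `(a,b)`. -/
def evalAt (f : PS K) (a b : K) : K :=
  ∑ᶠ α : Fin 2 →₀ ℕ, MvPowerSeries.coeff (R := K) α f * a ^ (α 0) * b ^ (α 1)

/-- The initial form `f_Δ` of `f` along a subset `Δ ⊆ ℝ²`. -/
def inFace (f : PS K) (Δ : Set (ℝ × ℝ)) : PS K :=
  fun α => if rpt α ∈ Δ then MvPowerSeries.coeff (R := K) α f else 0

/-- The initial part `f_in` of `f`: the sum of the terms supported on `Γ(f)`. -/
def initialPart (f : PS K) : PS K := inFace f (NewtonDiagram f)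

/-- `f` is degenerate along `Δ` if the Jacobian ideal of `f_Δ` has a zero in the torus. -/
def DegenerateAlong (f : PS K) (Δ : Set (ℝ × ℝ)) : Prop :=
  ∃ a b : K, a ≠ 0 ∧ b ≠ 0 ∧
    evalAt (pd 0 (inFace f Δ)) a b = 0 ∧ evalAt (pd 1 (inFace f Δ)) a b = 0

/-- Newton non-degenerate: non-degenerate along every face of the Newton diagram. -/
def NND (f : PS K) : Prop := ∀ Δ, IsFace f Δ → ¬DegenerateAlong f Δ

/-- `f` is weakly degenerate along `Δ` if the Tjurina ideal of `f_Δ` has a zero in the torus. -/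
def WeaklyDegenerateAlong (f : PS K) (Δ : Set (ℝ × ℝ)) : Prop :=
  ∃ a b : K, a ≠ 0 ∧ b ≠ 0 ∧ evalAt (inFace f Δ) a b = 0 ∧
    evalAt (pd 0 (inFace f Δ)) a b = 0 ∧ evalAt (pd 1 (inFace f Δ)) a b = 0

/-- Weakly Newton non-degenerate: weakly non-degenerate along each edge of `Γ(f)`. -/
def WNND (f : PS K) : Prop := ∀ Δ, IsEdge f Δ → ¬WeaklyDegenerateAlong f Δ

/-- The `(n,m)`-weighted homogeneous component of `f` of weighted degree `l`. -/
def wtComp (n m l : ℕ) (f : PS K) : PS K :=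
  fun α => if n * α 0 + m * α 1 = l then MvPowerSeries.coeff (R := K) α f else 0

/-- The binomial `a x^m - b y^n`. -/
def binomPS (a b : K) (m n : ℕ) : PS K :=
  MvPowerSeries.C (σ := Fin 2) (R := K) a * (MvPowerSeries.X 0) ^ m -
    MvPowerSeries.C (σ := Fin 2) (R := K) b * (MvPowerSeries.X 1) ^ n

/-- Weighted homogeneous Newton non-degenerate: there are no `a, b ∈ K*` and coprime positive
`m, n` such that the first term of the `(n,m)`-weighted homogeneous decomposition of `f`
is divisible by `(a x^m - b y^n)²` and the second term is divisible by `(a x^m - b y^n)`. -/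
def WHNND (f : PS K) : Prop :=
  ¬∃ (a b : K) (m n d : ℕ), a ≠ 0 ∧ b ≠ 0 ∧ 0 < m ∧ 0 < n ∧ Nat.Coprime m n ∧
    wtComp n m d f ≠ 0 ∧ (∀ l < d, wtComp n m l f = 0) ∧
    binomPS a b m n ^ 2 ∣ wtComp n m d f ∧ binomPS a b m n ∣ wtComp n m (d + 1) f

/-- The region on or above `P` (along rays from the origin). -/
def Above (P : Set (ℝ × ℝ)) : Set (ℝ × ℝ) := {q | ∃ p ∈ P, ∃ t : ℝ, 1 ≤ t ∧ q = t • p}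

/-- A C-polytope: a compact rational polytope of dimension 1 in the positive quadrant such that
the region above it is convex and every ray from the origin in the positive quadrant meets it
in exactly one point. -/
def CPolytope (P : Set (ℝ × ℝ)) : Prop :=
  IsCompact P ∧ P ⊆ {q | 0 ≤ q.1 ∧ 0 ≤ q.2} ∧ Convex ℝ (Above P) ∧
  (∃ S : Finset ((ℚ × ℚ) × (ℚ × ℚ)),
    P = ⋃ e ∈ S, segment ℝ (((e.1.1 : ℝ), (e.1.2 : ℝ))) (((e.2.1 : ℝ), (e.2.2 : ℝ)))) ∧
  ∀ q : ℝ × ℝ, 0 ≤ q.1 → 0 ≤ q.2 → q ≠ 0 → ∃! t : ℝ, 0 < t ∧ t • q ∈ P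

/-- An inner face of a C-polytope: a compact face not contained in a coordinate hyperplane. -/
def IsInnerFaceOf (P Δ : Set (ℝ × ℝ)) : Prop :=
  Δ.Nonempty ∧
  (∃ w : ℝ × ℝ, 0 < w.1 ∧ 0 < w.2 ∧ Δ = {q ∈ Above P | ∀ p ∈ Above P, dotp w q ≤ dotp w p}) ∧
  ∃ q ∈ Δ, q.1 ≠ 0 ∧ q.2 ≠ 0

/-- Inner non-degenerate along `Δ`: for each zero `q = (a,b)` of `j(in_Δ f)`, the face `Δ`
contains no point of the coordinate subspace `H_q` determined by the vanishing coordinates. -/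
def INDalong (f : PS K) (Δ : Set (ℝ × ℝ)) : Prop :=
  ∀ a b : K, evalAt (pd 0 (inFace f Δ)) a b = 0 → evalAt (pd 1 (inFace f Δ)) a b = 0 →
    ∀ q ∈ Δ, ¬((a = 0 → q.1 = 0) ∧ (b = 0 → q.2 = 0))

/-- Inner Newton non-degenerate with respect to a C-polytope `P`. -/
def INNDwrt (f : PS K) (P : Set (ℝ × ℝ)) : Prop :=
  CPolytope P ∧ (∀ p ∈ suppR f, p ∈ Above P) ∧ ∀ Δ, IsInnerFaceOf P Δ → INDalong f Δ

/-- Inner Newton non-degenerate. -/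
def INND (f : PS K) : Prop := ∃ P, INNDwrt f P

/-- The condition ND1 along the vertex `(0,n)` on the `y`-axis. -/
def ND1y (f : PS K) (n : ℕ) : Prop :=
  ringChar K = 0 ∨ ¬(ringChar K ∣ n) ∨
    ∃ j1 : ℕ, ((1 : ℝ), (j1 : ℝ)) ∈ NewtonDiagram f ∧
      MvPowerSeries.coeff (R := K) (Finsupp.single 0 1 + Finsupp.single 1 j1) f ≠ 0

/-- The condition ND1 along the vertex `(m,0)` on the `x`-axis. -/
def ND1x (f : PS K) (m : ℕ) : Prop :=
  ringChar K = 0 ∨ ¬(ringChar K ∣ m) ∨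
    ∃ i1 : ℕ, ((i1 : ℝ), (1 : ℝ)) ∈ NewtonDiagram f ∧
      MvPowerSeries.coeff (R := K) (Finsupp.single 0 i1 + Finsupp.single 1 1) f ≠ 0

/-- NND1: convenient, non-degenerate along each inner face, and ND1 along the two vertices
of the Newton diagram on the axes. -/
def NND1 (f : PS K) : Prop :=
  Convenient f ∧
  (∀ Δ, IsFace f Δ → (∃ q ∈ Δ, q.1 ≠ 0 ∧ q.2 ≠ 0) → ¬DegenerateAlong f Δ) ∧
  (∀ n : ℕ, IsVertexOf f ((0 : ℝ), (n : ℝ)) → ND1y f n) ∧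
  (∀ m : ℕ, IsVertexOf f ((m : ℝ), (0 : ℝ)) → ND1x f m)

/-- Substitution `f(x(t), y(t))` of two one-variable power series without constant term into a
two-variable power series. -/
def substPS (f : PS K) (x y : PowerSeries K) : PowerSeries K :=
  PowerSeries.mk fun N => ∑ᶠ α : Fin 2 →₀ ℕ,
    MvPowerSeries.coeff (R := K) α f * PowerSeries.coeff (R := K) N (x ^ (α 0) * y ^ (α 1))

/-- Composition `x(h(t))` of one-variable power series (`h` without constant term). -/
def compPS (x h : PowerSeries K) : PowerSeries K :=
  PowerSeries.mk fun N => ∑ᶠ k : ℕ, PowerSeries.coeff (R := K) k x * PowerSeries.coeff (R := K) N (h ^ k)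

/-- A (primitive) parametrization of `f`. -/
def IsParam (f : PS K) (x y : PowerSeries K) : Prop :=
  PowerSeries.constantCoeff (R := K) x = 0 ∧ PowerSeries.constantCoeff (R := K) y = 0 ∧
  substPS f x y = 0 ∧
  ∀ u v : PowerSeries K, PowerSeries.constantCoeff (R := K) u = 0 →
    PowerSeries.constantCoeff (R := K) v = 0 → substPS f u v = 0 →
      ∃! h : PowerSeries K, PowerSeries.constantCoeff (R := K) h = 0 ∧
        u = compPS x h ∧ v = compPS y h

/-- `x(t)` has leading term `a t^α`. -/
def HasLeadTerm (x : PowerSeries K) (a : K) (α : ℕ) : Prop :=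
  a ≠ 0 ∧ PowerSeries.coeff (R := K) α x = a ∧ ∀ i < α, PowerSeries.coeff (R := K) i x = 0

/-- The number of lattice points of a subset of `ℝ²`. -/
def latticeCount (S : Set (ℝ × ℝ)) : ℕ :=
  Nat.card ↥(S ∩ {p : ℝ × ℝ | ∃ i j : ℕ, p = ((i : ℝ), (j : ℝ))})

/-- A factorization of `f` into irreducible factors (counted with multiplicity). -/
def IsFactorization (f : PS K) (s : Multiset (PS K)) : Prop :=
  (∀ g ∈ s, Irreducible g) ∧ Associated s.prod f

/-- The class of a monomial in `Associates`. -/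
def IsMonomialClass (g : Associates (PS K)) : Prop :=
  ∃ i j : ℕ, g = Associates.mk ((MvPowerSeries.X 0 : PS K) ^ i * (MvPowerSeries.X 1) ^ j)

/-- `Σ_i s(f_{E_i})`: the number of non-monomial irreducible factors, up to associates, of the
initial forms of `f` along the edges of its Newton diagram. -/
def sEdges (f : PS K) : ℕ :=
  Nat.card ↥{g : Associates (PS K) | Irreducible g ∧ ¬IsMonomialClass g ∧
    ∃ Δ, IsEdge f Δ ∧ g ∣ Associates.mk (inFace f Δ)}

/-- Leading-term lemma for products of one-variable power series. -/
lemma lead_mul (x y : PowerSeries K) (p q : ℕ) (cx cy : K)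
    (hx0 : ∀ k < p, PowerSeries.coeff (R := K) k x = 0) (hxp : PowerSeries.coeff (R := K) p x = cx)
    (hy0 : ∀ k < q, PowerSeries.coeff (R := K) k y = 0) (hyq : PowerSeries.coeff (R := K) q y = cy) :
    (∀ k < p + q, PowerSeries.coeff (R := K) k (x * y) = 0) ∧
      PowerSeries.coeff (R := K) (p + q) (x * y) = cx * cy := by
  constructor
  · intro k hk
    rw [PowerSeries.coeff_mul]
    apply Finset.sum_eq_zero
    rintro ⟨u, v⟩ huv
    simp only [Finset.HasAntidiagonal.mem_antidiagonal] at huv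
    by_cases hu : u < p
    · rw [hx0 u hu, zero_mul]
    · have hv : v < q := by omega
      rw [hy0 v hv, mul_zero]
  · rw [PowerSeries.coeff_mul, Finset.sum_eq_single (p, q)]
    · rw [hxp, hyq]
    · rintro ⟨u, v⟩ huv hne
      simp only [Finset.HasAntidiagonal.mem_antidiagonal] at huv
      by_cases hu : u < p
      · rw [hx0 u hu, zero_mul]
      · by_cases hu' : u = p
        · exfalso; apply hne; subst hu'
          have : v = q := by omega
          subst this; rfl
        · have hv : v < q := by omega
          rw [hy0 v hv, mul_zero]
    · intro h
      exfalso
      exact h (Finset.HasAntidiagonal.mem_antidiagonal.mpr rfl)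

/-- Leading-term lemma for powers of a one-variable power series. -/
lemma lead_pow (x : PowerSeries K) (a : K) (α : ℕ) (hx : HasLeadTerm x a α) (i : ℕ) :
    (∀ k < i * α, PowerSeries.coeff (R := K) k (x ^ i) = 0) ∧
      PowerSeries.coeff (R := K) (i * α) (x ^ i) = a ^ i := by
  induction i with
  | zero =>
    constructor
    · intro k hk; omega
    · simp
  | succ i ih =>
    have h := lead_mul (x ^ i) x (i * α) α (a ^ i) a ih.1 ih.2 hx.2.2 hx.2.1
    constructor
    · intro k hk
      rw [pow_succ]
      have he : (i + 1) * α = i * α + α := by ring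
      rw [he] at hk
      exact h.1 k hk
    · have he : (i + 1) * α = i * α + α := by ring
      rw [pow_succ, he, h.2, pow_succ]

/-- Lemma 2.7: if `x(t), y(t)` have leading terms `a t^α`, `b t^β` with `α : β = n : m`, then
`ord f(x(t), y(t)) ≥ d α / n`, with equality iff `f_d(a,b) ≠ 0` (where `f_d` is the first term
of the `(n,m)`-weighted homogeneous decomposition of `f`). -/
theorem stmt3 (f : PS K) (n m : ℕ) (hn : 0 < n) (hm : 0 < m)
    (x y : PowerSeries K) (a b : K) (α β : ℕ) (hα : 0 < α) (hβ : 0 < β)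
    (hx : HasLeadTerm x a α) (hy : HasLeadTerm y b β) (hratio : α * m = β * n)
    (d : ℕ) (hd : wtComp n m d f ≠ 0) (hlow : ∀ l < d, wtComp n m l f = 0) :
    ((d * α : ℕ) : ℕ∞) ≤ (n : ℕ∞) * PowerSeries.order (substPS f x y) ∧
      ((n : ℕ∞) * PowerSeries.order (substPS f x y) = ((d * α : ℕ) : ℕ∞) ↔
        evalAt (wtComp n m d f) a b ≠ 0) := by
  -- leading-term lemma for monomials x^i * y^j
  have hmono : ∀ i j : ℕ,
      (∀ k < i * α + j * β, PowerSeries.coeff (R := K) k (x ^ i * y ^ j) = 0) ∧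
        PowerSeries.coeff (R := K) (i * α + j * β) (x ^ i * y ^ j) = a ^ i * b ^ j := by
    intro i j
    exact lead_mul (x ^ i) (y ^ j) (i * α) (j * β) (a ^ i) (b ^ j)
      (lead_pow x a α hx i).1 (lead_pow x a α hx i).2
      (lead_pow y b β hy j).1 (lead_pow y b β hy j).2
  -- weight identity
  have hwt : ∀ i j : ℕ, n * (i * α + j * β) = α * (n * i + m * j) := by
    intro i j
    calc n * (i * α + j * β) = n * i * α + j * (β * n) := by ring
      _ = n * i * α + j * (α * m) := by rw [← hratio]
      _ = α * (n * i + m * j) := by ring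
  -- low coefficients of f vanish
  have hco : ∀ γ : Fin 2 →₀ ℕ, n * γ 0 + m * γ 1 < d → MvPowerSeries.coeff (R := K) γ f = 0 := by
    intro γ hγ
    have h := congrFun (hlow (n * γ 0 + m * γ 1) hγ) γ
    exact (by simpa [wtComp, MvPowerSeries.coeff_apply] using h : f γ = (0 : PS K) γ)
  -- a witness of weight d with nonzero coefficient
  obtain ⟨γ₀, hγ₀⟩ : ∃ γ : Fin 2 →₀ ℕ, wtComp n m d f γ ≠ 0 := by
    by_contra h
    push_neg at h
    exact hd (funext fun γ => h γ)
  have hγ₀wt : n * γ₀ 0 + m * γ₀ 1 = d := by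
    by_contra h
    exact hγ₀ (by simp [wtComp, MvPowerSeries.coeff_apply, h])
  set N₀ : ℕ := γ₀ 0 * α + γ₀ 1 * β with hN₀def
  have hkey : n * N₀ = d * α := by
    rw [hN₀def, hwt, hγ₀wt, mul_comm]
  -- coefficients of the substitution vanish below N₀
  have hvanish : ∀ N < N₀, PowerSeries.coeff (R := K) N (substPS f x y) = 0 := by
    intro N hN
    rw [substPS, PowerSeries.coeff_mk]
    apply finsum_eq_zero_of_forall_eq_zero
    intro γ
    by_cases hlt : n * γ 0 + m * γ 1 < d
    · rw [hco γ hlt, zero_mul]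
    · push_neg at hlt
      have hord : N < γ 0 * α + γ 1 * β := by
        have h1 : n * N₀ ≤ n * (γ 0 * α + γ 1 * β) := by
          rw [hN₀def, hwt, hwt, hγ₀wt]
          exact Nat.mul_le_mul_left α hlt
        have := Nat.le_of_mul_le_mul_left h1 hn
        omega
      rw [(hmono (γ 0) (γ 1)).1 N hord, mul_zero]
  -- the coefficient at N₀ equals the evaluation of the d-th weighted part
  have hcoeffN₀ : PowerSeries.coeff (R := K) N₀ (substPS f x y) = evalAt (wtComp n m d f) a b := by
    rw [substPS, PowerSeries.coeff_mk, evalAt]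
    apply finsum_congr
    intro γ
    by_cases hcond : n * γ 0 + m * γ 1 = d
    · have horder : γ 0 * α + γ 1 * β = N₀ := by
        have h1 : n * (γ 0 * α + γ 1 * β) = n * N₀ := by
          rw [hwt, hcond, hkey]; ring
        exact Nat.eq_of_mul_eq_mul_left hn h1
      rw [← horder, (hmono (γ 0) (γ 1)).2]
      simp [wtComp, MvPowerSeries.coeff_apply, hcond, mul_assoc]
    · have hz : MvPowerSeries.coeff (R := K) γ (wtComp n m d f) = 0 := by
        simp [wtComp, MvPowerSeries.coeff_apply, hcond]
      rw [hz, zero_mul, zero_mul]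
      rcases Nat.lt_or_ge (n * γ 0 + m * γ 1) d with hlt | hge
      · rw [hco γ hlt, zero_mul]
      · have hgt : d < n * γ 0 + m * γ 1 := lt_of_le_of_ne hge (Ne.symm hcond)
        have hord : N₀ < γ 0 * α + γ 1 * β := by
          have h1 : n * N₀ < n * (γ 0 * α + γ 1 * β) := by
            rw [hN₀def, hwt, hwt, hγ₀wt]
            exact mul_lt_mul_of_pos_left hgt hα
          exact Nat.lt_of_mul_lt_mul_left h1
        rw [(hmono (γ 0) (γ 1)).1 N₀ hord, mul_zero]
  have hge : (N₀ : ℕ∞) ≤ PowerSeries.order (substPS f x y) :=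
    PowerSeries.nat_le_order _ N₀ hvanish
  have horder_iff : PowerSeries.order (substPS f x y) = (N₀ : ℕ∞) ↔
      evalAt (wtComp n m d f) a b ≠ 0 := by
    rw [PowerSeries.order_eq_nat, hcoeffN₀]
    exact and_iff_left hvanish
  constructor
  · calc ((d * α : ℕ) : ℕ∞) = ((n * N₀ : ℕ) : ℕ∞) := by rw [hkey]
      _ = (n : ℕ∞) * (N₀ : ℕ∞) := by push_cast; rfl
      _ ≤ (n : ℕ∞) * PowerSeries.order (substPS f x y) := mul_le_mul_right hge _
  · rw [← horder_iff]
    constructor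
    · intro h
      have hne : PowerSeries.order (substPS f x y) ≠ ⊤ := by
        intro ht
        rw [ht, ENat.mul_top (Nat.cast_ne_zero.mpr hn.ne')] at h
        exact ENat.coe_ne_top (d * α) h.symm
      lift PowerSeries.order (substPS f x y) to ℕ using hne with N hN
      have hnat : n * N = d * α := by exact_mod_cast h
      have hNN : N = N₀ := Nat.eq_of_mul_eq_mul_left hn (by rw [hnat, hkey])
      rw [hNN]
    · intro h
      rw [h, ← hkey]
      push_cast
      rfl

end
end

section
/- Let E be an edge of the Newton diagram of f ∈ K[[x,y]], and write f_E = (monomial) · ∏_{i=1}^s (a_i x^{m_0} − b_i y^{n_0})^{r_i} with a_i, b_i ∈ K*, (a_i : b_i) pairwise distinct, gcd(m_0, n_0) = 1. Then f is weakly non-degenerate (WND) along E if and only if r_i = 1 for all i, equivalently s(f_E) = l(E). In particular, WNND implies WHNND. -/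
open MvPowerSeries MeasureTheory
open scoped Classical ENNReal

noncomputable section

variable {K : Type*} [Field K]

section Aux
variable {K : Type*} [Field K]
open MvPowerSeries

lemma coeff_pd (i : Fin 2) (f : PS K) (α : Fin 2 →₀ ℕ) :
    MvPowerSeries.coeff (R := K) α (pd i f) = ((α i + 1 : ℕ) : K) * MvPowerSeries.coeff (R := K) (α + Finsupp.single i 1) f := rfl

lemma coeff_pderiv' (i : Fin 2) (p : MvPolynomial (Fin 2) K) (α : Fin 2 →₀ ℕ) :
    MvPolynomial.coeff α (MvPolynomial.pderiv i p) =
      ((α i + 1 : ℕ) : K) * MvPolynomial.coeff (α + Finsupp.single i 1) p := by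
  induction p using MvPolynomial.induction_on' with
  | monomial s a =>
    rw [MvPolynomial.pderiv_monomial]
    rw [MvPolynomial.coeff_monomial, MvPolynomial.coeff_monomial]
    by_cases h : s = α + Finsupp.single i 1
    · have hsi : s i = α i + 1 := by simp [h]
      have : s - Finsupp.single i 1 = α := by
        ext j; by_cases hj : j = i <;> simp [h, Finsupp.single_apply, hj]
      simp [h, this, hsi, mul_comm]
    · have : ¬ (s - Finsupp.single i 1 = α) ∨ s i = 0 := by
        by_cases hsi : s i = 0
        · right; exact hsi
        · left; intro hc; apply h; ext j
          have := DFunLike.congr_fun hc j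
          simp only [Finsupp.tsub_apply] at this
          rcases eq_or_ne j i with hj | hj
          · subst hj
            simp only [Finsupp.single_eq_same, Finsupp.add_apply] at this ⊢
            omega
          · simp only [Finsupp.single_apply, if_neg (Ne.symm hj), Finsupp.add_apply] at this ⊢
            omega
      rcases this with h1 | h1
      · simp [h1, if_neg h]
      · by_cases h2 : s - Finsupp.single i 1 = α <;> simp [h2, h1, if_neg h]
  | add p q hp hq => simp [map_add, MvPolynomial.coeff_add, hp, hq, mul_add]

lemma pd_coe (i : Fin 2) (p : MvPolynomial (Fin 2) K) :
    pd i (↑p : PS K) = ↑(MvPolynomial.pderiv i p) := by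
  ext α
  rw [MvPolynomial.coeff_coe, coeff_pd, MvPolynomial.coeff_coe, coeff_pderiv']

/-- evaluation map as a function Fin 2 → K -/
def ev2 (x y : K) : Fin 2 → K := fun j => if j = 0 then x else y

lemma evalAt_coe (p : MvPolynomial (Fin 2) K) (x y : K) :
    evalAt (↑p : PS K) x y = MvPolynomial.eval (ev2 x y) p := by
  unfold evalAt
  rw [finsum_eq_finset_sum_of_support_subset _ (s := p.support)]
  · rw [MvPolynomial.eval_eq]
    apply Finset.sum_congr rfl
    intro α hα
    rw [MvPolynomial.coeff_coe]
    rw [Finset.prod_subset (Finset.subset_univ α.support)]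
    · rw [Fin.prod_univ_two]
      simp [ev2, mul_assoc]
    · intro i _ hi
      simp [Finsupp.notMem_support_iff.mp hi]
  · intro α hα
    simp only [Function.mem_support, ne_eq] at hα
    rw [Finset.mem_coe, MvPolynomial.mem_support_iff]
    intro h
    apply hα
    rw [MvPolynomial.coeff_coe, h, zero_mul, zero_mul]

end Aux
section Aux2
variable {K : Type*} [Field K]
open MvPolynomial

/-- The binomial as a polynomial. -/
def binomPoly (a b : K) (m n : ℕ) : MvPolynomial (Fin 2) K :=
  MvPolynomial.C a * MvPolynomial.X 0 ^ m - MvPolynomial.C b * MvPolynomial.X 1 ^ n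

lemma coe_ringHom_eq (p : MvPolynomial (Fin 2) K) :
    (coeToMvPowerSeries.ringHom p : PS K) = ↑p := rfl

lemma binomPoly_coe (a b : K) (m n : ℕ) :
    ((binomPoly a b m n : MvPolynomial (Fin 2) K) : PS K) = binomPS a b m n := by
  rw [← coe_ringHom_eq, binomPoly, binomPS, map_sub, map_mul, map_mul, map_pow, map_pow]
  simp [coe_ringHom_eq, coe_C, coe_X]

lemma eval_binomPoly (a b x y : K) (m n : ℕ) :
    eval (ev2 x y) (binomPoly a b m n) = a * x ^ m - b * y ^ n := by
  simp [binomPoly, ev2]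

lemma eval_pderiv_binomPoly0 (a b x y : K) (m n : ℕ) (hn : 0 < n) :
    eval (ev2 x y) (pderiv 0 (binomPoly a b m n)) = a * m * x ^ (m - 1) := by
  have h10 : (1 : Fin 2) ≠ 0 := by decide
  simp [binomPoly, pderiv_mul, MvPolynomial.pderiv_pow, MvPolynomial.pderiv_X, Pi.single_apply, ev2,
    MvPolynomial.pderiv_C, if_neg h10]
  ring

lemma eval_pderiv_binomPoly1 (a b x y : K) (m n : ℕ) (hm : 0 < m) :
    eval (ev2 x y) (pderiv 1 (binomPoly a b m n)) = -(b * n * y ^ (n - 1)) := by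
  have h01 : (0 : Fin 2) ≠ 1 := by decide
  simp [binomPoly, pderiv_mul, MvPolynomial.pderiv_pow, MvPolynomial.pderiv_X, Pi.single_apply, ev2,
    MvPolynomial.pderiv_C, if_neg h01]
  ring

/-- solving `a x^m = b y^n` in the torus, for coprime `m n`. -/
lemma exists_torus_zero (a b : K) (ha : a ≠ 0) (hb : b ≠ 0) (m n : ℕ)
    (hm : 0 < m) (hn : 0 < n) (hcop : Nat.Coprime m n) :
    ∃ x y : K, x ≠ 0 ∧ y ≠ 0 ∧ a * x ^ m = b * y ^ n := by
  have hcop' : IsCoprime (m : ℤ) (n : ℤ) := by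
    rw [Int.isCoprime_iff_gcd_eq_one]
    simpa [Int.gcd] using hcop
  obtain ⟨p, q, hpq⟩ := hcop'
  set c : K := b / a with hc
  have hc0 : c ≠ 0 := div_ne_zero hb ha
  refine ⟨c ^ p, c ^ (-q), zpow_ne_zero _ hc0, zpow_ne_zero _ hc0, ?_⟩
  have h1 : (c ^ p) ^ m = c ^ (p * (m : ℤ)) := by
    rw [zpow_mul, zpow_natCast]
  have h2 : (c ^ (-q)) ^ n = c ^ (-q * (n : ℤ)) := by
    rw [zpow_mul, zpow_natCast]
  have hb' : b = a * c := by rw [hc]; field_simp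
  rw [h1, h2, hb', mul_assoc]
  congr 1
  rw [← zpow_one_add₀ hc0]
  congr 1
  push_cast
  linarith
end Aux2
section Aux3
variable {K : Type*} [Field K]
open MvPolynomial

/-- The polynomial form of the edge factorization. -/
def edgePoly {sc : ℕ} (a b : Fin sc → K) (r : Fin sc → ℕ) (m0 n0 u v : ℕ) (c : K) :
    MvPolynomial (Fin 2) K :=
  MvPolynomial.C c * MvPolynomial.X 0 ^ u * MvPolynomial.X 1 ^ v *
    ∏ i, binomPoly (a i) (b i) m0 n0 ^ r i

lemma edgePoly_coe {sc : ℕ} (a b : Fin sc → K) (r : Fin sc → ℕ) (m0 n0 u v : ℕ) (c : K) :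
    ((edgePoly a b r m0 n0 u v c : MvPolynomial (Fin 2) K) : PS K) =
      MvPowerSeries.C (σ := Fin 2) (R := K) c * (MvPowerSeries.X 0) ^ u * (MvPowerSeries.X 1) ^ v *
        ∏ i, binomPS (a i) (b i) m0 n0 ^ r i := by
  rw [← coe_ringHom_eq, edgePoly, map_mul, map_mul, map_mul, map_pow, map_pow, map_prod]
  simp only [map_pow, coe_ringHom_eq, coe_C, coe_X, binomPoly_coe]

lemma WDA_iff_poly (f : PS K) (Δ : Set (ℝ × ℝ)) (F : MvPolynomial (Fin 2) K)
    (h : inFace f Δ = ↑F) :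
    WeaklyDegenerateAlong f Δ ↔ ∃ x y : K, x ≠ 0 ∧ y ≠ 0 ∧
      eval (ev2 x y) F = 0 ∧ eval (ev2 x y) (pderiv 0 F) = 0 ∧
      eval (ev2 x y) (pderiv 1 F) = 0 := by
  unfold WeaklyDegenerateAlong
  rw [h]
  constructor
  · rintro ⟨x, y, hx, hy, h1, h2, h3⟩
    rw [evalAt_coe] at h1
    rw [pd_coe, evalAt_coe] at h2 h3
    exact ⟨x, y, hx, hy, h1, h2, h3⟩
  · rintro ⟨x, y, hx, hy, h1, h2, h3⟩
    exact ⟨x, y, hx, hy, by rwa [evalAt_coe], by rwa [pd_coe, evalAt_coe],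
      by rwa [pd_coe, evalAt_coe]⟩

lemma deg_of_two_le {sc : ℕ} (a b : Fin sc → K) (r : Fin sc → ℕ) (m0 n0 u v : ℕ) (c : K)
    (hm0 : 0 < m0) (hn0 : 0 < n0) (hcop : Nat.Coprime m0 n0)
    (i0 : Fin sc) (hai0 : a i0 ≠ 0) (hbi0 : b i0 ≠ 0) (h2 : 2 ≤ r i0) :
    ∃ x y : K, x ≠ 0 ∧ y ≠ 0 ∧
      eval (ev2 x y) (edgePoly a b r m0 n0 u v c) = 0 ∧
      eval (ev2 x y) (pderiv 0 (edgePoly a b r m0 n0 u v c)) = 0 ∧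
      eval (ev2 x y) (pderiv 1 (edgePoly a b r m0 n0 u v c)) = 0 := by
  obtain ⟨x, y, hx, hy, hxy⟩ := exists_torus_zero (a i0) (b i0) hai0 hbi0 m0 n0 hm0 hn0 hcop
  have hb0 : eval (ev2 x y) (binomPoly (a i0) (b i0) m0 n0) = 0 := by
    rw [eval_binomPoly]; rw [hxy]; ring
  obtain ⟨G, hFF⟩ : ∃ G : MvPolynomial (Fin 2) K,
      edgePoly a b r m0 n0 u v c = binomPoly (a i0) (b i0) m0 n0 ^ r i0 * G := by
    refine ⟨MvPolynomial.C c * MvPolynomial.X 0 ^ u * MvPolynomial.X 1 ^ v *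
      ∏ i ∈ Finset.univ.erase i0, binomPoly (a i) (b i) m0 n0 ^ r i, ?_⟩
    rw [edgePoly, ← Finset.mul_prod_erase Finset.univ _ (Finset.mem_univ i0)]
    ring
  refine ⟨x, y, hx, hy, ?_, ?_, ?_⟩
  · rw [hFF, map_mul, map_pow, hb0, zero_pow (by omega), zero_mul]
  · rw [hFF, pderiv_mul, MvPolynomial.pderiv_pow, map_add, map_mul, map_mul, map_mul, map_mul, map_pow,
      map_pow, hb0, zero_pow (show r i0 - 1 ≠ 0 by omega), zero_pow (show r i0 ≠ 0 by omega)]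
    ring
  · rw [hFF, pderiv_mul, MvPolynomial.pderiv_pow, map_add, map_mul, map_mul, map_mul, map_mul, map_pow,
      map_pow, hb0, zero_pow (show r i0 - 1 ≠ 0 by omega), zero_pow (show r i0 ≠ 0 by omega)]
    ring

lemma nondeg_of_all_one {sc : ℕ} (a b : Fin sc → K) (r : Fin sc → ℕ) (m0 n0 u v : ℕ) (c : K)
    (hm0 : 0 < m0) (hn0 : 0 < n0) (hcop : Nat.Coprime m0 n0) (hc : c ≠ 0)
    (ha : ∀ i, a i ≠ 0) (hb : ∀ i, b i ≠ 0)
    (hdist : ∀ i j, i ≠ j → a i * b j ≠ a j * b i)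
    (hr1 : ∀ i, r i = 1) :
    ¬∃ x y : K, x ≠ 0 ∧ y ≠ 0 ∧
      eval (ev2 x y) (edgePoly a b r m0 n0 u v c) = 0 ∧
      eval (ev2 x y) (pderiv 0 (edgePoly a b r m0 n0 u v c)) = 0 ∧
      eval (ev2 x y) (pderiv 1 (edgePoly a b r m0 n0 u v c)) = 0 := by
  rintro ⟨x, y, hx, hy, h1, h2, h3⟩
  have hxm : x ^ m0 ≠ 0 := pow_ne_zero _ hx
  have hprod : ∏ i, eval (ev2 x y) (binomPoly (a i) (b i) m0 n0) = 0 := by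
    rw [edgePoly] at h1
    simp only [map_mul, map_pow, map_prod, eval_C, eval_X] at h1
    rcases mul_eq_zero.mp h1 with h | h
    · exfalso
      rcases mul_eq_zero.mp h with h' | h'
      · rcases mul_eq_zero.mp h' with h'' | h''
        · exact hc h''
        · exact pow_ne_zero u (show ev2 x y 0 ≠ 0 by simpa [ev2] using hx) h''
      · exact pow_ne_zero v (show ev2 x y 1 ≠ 0 by simpa [ev2] using hy) h'
    · rw [← h]
      apply Finset.prod_congr rfl
      intro i _
      rw [hr1 i, pow_one]
  obtain ⟨i0, _, hi0⟩ := Finset.prod_eq_zero_iff.mp hprod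
  have huniq : ∀ j, j ≠ i0 → eval (ev2 x y) (binomPoly (a j) (b j) m0 n0) ≠ 0 := by
    intro j hj hj0
    rw [eval_binomPoly, sub_eq_zero] at hj0
    have hi0' := hi0
    rw [eval_binomPoly, sub_eq_zero] at hi0'
    apply hdist j i0 hj
    have : a j * b i0 * x ^ m0 = a i0 * b j * x ^ m0 := by
      calc a j * b i0 * x ^ m0 = b i0 * (a j * x ^ m0) := by ring
      _ = b i0 * (b j * y ^ n0) := by rw [hj0]
      _ = b j * (b i0 * y ^ n0) := by ring
      _ = b j * (a i0 * x ^ m0) := by rw [← hi0']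
      _ = a i0 * b j * x ^ m0 := by ring
    exact mul_right_cancel₀ hxm this
  obtain ⟨G, hFF, hGne⟩ : ∃ G : MvPolynomial (Fin 2) K,
      edgePoly a b r m0 n0 u v c = binomPoly (a i0) (b i0) m0 n0 * G ∧
      eval (ev2 x y) G ≠ 0 := by
    refine ⟨MvPolynomial.C c * MvPolynomial.X 0 ^ u * MvPolynomial.X 1 ^ v *
      ∏ i ∈ Finset.univ.erase i0, binomPoly (a i) (b i) m0 n0 ^ r i, ?_, ?_⟩
    · rw [edgePoly, ← Finset.mul_prod_erase Finset.univ _ (Finset.mem_univ i0), hr1 i0, pow_one]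
      ring
    · simp only [map_mul, map_pow, map_prod, eval_C, eval_X]
      apply mul_ne_zero
      apply mul_ne_zero
      apply mul_ne_zero hc
      · exact pow_ne_zero u (show ev2 x y 0 ≠ 0 by simpa [ev2] using hx)
      · exact pow_ne_zero v (show ev2 x y 1 ≠ 0 by simpa [ev2] using hy)
      · rw [Finset.prod_ne_zero_iff]
        intro j hj
        apply pow_ne_zero
        exact huniq j (Finset.ne_of_mem_erase hj)
  have key0 : (m0 : K) = 0 := by
    rw [hFF, pderiv_mul] at h2
    rw [map_add, map_mul, map_mul, hi0, zero_mul, add_zero] at h2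
    rcases mul_eq_zero.mp h2 with h | h
    · rw [eval_pderiv_binomPoly0 _ _ _ _ _ _ hn0] at h
      rcases mul_eq_zero.mp h with h' | h'
      · rcases mul_eq_zero.mp h' with h'' | h''
        · exact absurd h'' (ha i0)
        · exact h''
      · exact absurd h' (pow_ne_zero _ hx)
    · exact absurd h hGne
  have key1 : (n0 : K) = 0 := by
    rw [hFF, pderiv_mul] at h3
    rw [map_add, map_mul, map_mul, hi0, zero_mul, add_zero] at h3
    rcases mul_eq_zero.mp h3 with h | h
    · rw [eval_pderiv_binomPoly1 _ _ _ _ _ _ hm0, neg_eq_zero] at h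
      rcases mul_eq_zero.mp h with h' | h'
      · rcases mul_eq_zero.mp h' with h'' | h''
        · exact absurd h'' (hb i0)
        · exact h''
      · exact absurd h' (pow_ne_zero _ hy)
    · exact absurd h hGne
  set p := ringChar K with hp
  have hcharp : CharP K p := ringChar.charP K
  have hdm : p ∣ m0 := (CharP.cast_eq_zero_iff K p m0).mp key0
  have hdn : p ∣ n0 := (CharP.cast_eq_zero_iff K p n0).mp key1
  rcases CharP.char_is_prime_or_zero K p with hpr | h0
  · have : p ∣ Nat.gcd m0 n0 := Nat.dvd_gcd hdm hdn
    rw [hcop] at this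
    exact Nat.Prime.one_lt hpr |>.ne' (Nat.dvd_one.mp this)
  · rw [h0] at hdm
    exact hm0.ne' (zero_dvd_iff.mp hdm)
end Aux3
section Aux4
variable {K : Type*} [Field K]
open MvPowerSeries

/-- the `(n,m)`-weight of an exponent -/
def wtd (n m : ℕ) (α : Fin 2 →₀ ℕ) : ℕ := n * α 0 + m * α 1

lemma coeff_wtComp (n m l : ℕ) (f : PS K) (α : Fin 2 →₀ ℕ) :
    MvPowerSeries.coeff (R := K) α (wtComp n m l f) =
      if wtd n m α = l then MvPowerSeries.coeff (R := K) α f else 0 := rfl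

/-- weighted-homogeneous of degree `l` -/
def IsWtHomog (n m l : ℕ) (F : PS K) : Prop :=
  ∀ α, MvPowerSeries.coeff (R := K) α F ≠ 0 → wtd n m α = l

lemma isWtHomog_wtComp (n m l : ℕ) (f : PS K) : IsWtHomog n m l (wtComp n m l f) := by
  intro α h
  rw [coeff_wtComp] at h
  by_contra hc
  exact h (if_neg hc)

lemma wtComp_wtComp (n m l : ℕ) (f : PS K) :
    wtComp n m l (wtComp n m l f) = wtComp n m l f := by
  ext α
  simp only [coeff_wtComp]
  split_ifs with h <;> rfl

lemma exists_coeff_ne_zero {F : PS K} (h : F ≠ 0) :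
    ∃ α, MvPowerSeries.coeff (R := K) α F ≠ 0 := by
  by_contra hc
  push_neg at hc
  exact h (by ext α; simpa using hc α)

lemma wtd_add (n m : ℕ) (α β : Fin 2 →₀ ℕ) :
    wtd n m (α + β) = wtd n m α + wtd n m β := by
  simp only [wtd, Finsupp.add_apply]
  ring

lemma isWtHomog_mul {n m l l' : ℕ} {F G : PS K}
    (hF : IsWtHomog n m l F) (hG : IsWtHomog n m l' G) :
    IsWtHomog n m (l + l') (F * G) := by
  intro α h
  rw [MvPowerSeries.coeff_mul] at h
  obtain ⟨p, hp, hne⟩ := Finset.exists_ne_zero_of_sum_ne_zero h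
  rw [Finset.HasAntidiagonal.mem_antidiagonal] at hp
  have h1 : MvPowerSeries.coeff (R := K) p.1 F ≠ 0 := fun hz => hne (by rw [hz, zero_mul])
  have h2 : MvPowerSeries.coeff (R := K) p.2 G ≠ 0 := fun hz => hne (by rw [hz, mul_zero])
  rw [← hp, wtd_add, hF p.1 h1, hG p.2 h2]

lemma coeff_binomPS (a b : K) (m n : ℕ) (α : Fin 2 →₀ ℕ) :
    MvPowerSeries.coeff (R := K) α (binomPS a b m n) =
      (if α = Finsupp.single 0 m then a else 0) - (if α = Finsupp.single 1 n then b else 0) := by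
  rw [← binomPoly_coe, MvPolynomial.coeff_coe, binomPoly,
    MvPolynomial.C_mul_X_pow_eq_monomial, MvPolynomial.C_mul_X_pow_eq_monomial,
    MvPolynomial.coeff_sub, MvPolynomial.coeff_monomial, MvPolynomial.coeff_monomial]
  congr 1 <;> simp [eq_comm]

lemma single_m_ne_single_n {m n : ℕ} (hm : 0 < m) :
    (Finsupp.single 0 m : Fin 2 →₀ ℕ) ≠ Finsupp.single 1 n := by
  intro h
  have := DFunLike.congr_fun h (0 : Fin 2)
  simp [Finsupp.single_apply] at this
  omega

lemma isWtHomog_binomPS (a b : K) {m n : ℕ} :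
    IsWtHomog n m (n * m) (binomPS a b m n : PS K) := by
  intro α h
  rw [coeff_binomPS] at h
  by_cases h1 : α = Finsupp.single 0 m
  · subst h1; simp [wtd, Finsupp.single_apply]
  · by_cases h2 : α = Finsupp.single 1 n
    · subst h2; simp [wtd, Finsupp.single_apply, mul_comm]
    · simp [h1, h2] at h

lemma binomPS_ne_zero {a b : K} (ha : a ≠ 0) {m n : ℕ} (hm : 0 < m) :
    (binomPS a b m n : PS K) ≠ 0 := by
  intro h
  have := congrArg (MvPowerSeries.coeff (R := K) (Finsupp.single 0 m)) h
  rw [coeff_binomPS, if_pos rfl, if_neg (single_m_ne_single_n hm)] at this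
  simp at this
  exact ha this

/-- the key graded-multiplication lemma -/
lemma wtComp_mul_homog (n m dF l : ℕ) (F G : PS K) (hF : IsWtHomog n m dF F) :
    wtComp n m l (F * G) = if dF ≤ l then F * wtComp n m (l - dF) G else 0 := by
  split_ifs with hle
  · ext α
    rw [coeff_wtComp, MvPowerSeries.coeff_mul, MvPowerSeries.coeff_mul]
    split_ifs with hα
    · apply Finset.sum_congr rfl
      intro p hp
      rw [Finset.HasAntidiagonal.mem_antidiagonal] at hp
      by_cases hF1 : MvPowerSeries.coeff (R := K) p.1 F = 0
      · rw [hF1, zero_mul, zero_mul]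
      · have hw1 : wtd n m p.1 = dF := hF p.1 hF1
        have hw : wtd n m p.2 = l - dF := by
          have := wtd_add n m p.1 p.2
          rw [hp, hα, hw1] at this
          omega
        rw [coeff_wtComp, if_pos hw]
    · symm
      apply Finset.sum_eq_zero
      intro p hp
      rw [Finset.HasAntidiagonal.mem_antidiagonal] at hp
      by_cases hF1 : MvPowerSeries.coeff (R := K) p.1 F = 0
      · rw [hF1, zero_mul]
      · rw [coeff_wtComp]
        have hw1 : wtd n m p.1 = dF := hF p.1 hF1
        split_ifs with hw2
        · exfalso
          apply hα
          have := wtd_add n m p.1 p.2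
          rw [hp, hw1, hw2] at this
          omega
        · rw [mul_zero]
  · ext α
    rw [coeff_wtComp, map_zero]
    split_ifs with hα
    · rw [MvPowerSeries.coeff_mul]
      apply Finset.sum_eq_zero
      intro p hp
      rw [Finset.HasAntidiagonal.mem_antidiagonal] at hp
      by_cases hF1 : MvPowerSeries.coeff (R := K) p.1 F = 0
      · rw [hF1, zero_mul]
      · exfalso
        have hw1 : wtd n m p.1 = dF := hF p.1 hF1
        have := wtd_add n m p.1 p.2
        rw [hp, hα, hw1] at this
        omega
    · rfl

lemma homog_bound {n m l : ℕ} (hn : 0 < n) (hm : 0 < m) {F : PS K}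
    (hF : IsWtHomog n m l F) :
    ∀ α, MvPowerSeries.coeff (R := K) α F ≠ 0 →
      α ≤ Finsupp.single 0 l + Finsupp.single 1 l := by
  intro α h
  have hw := hF α h
  simp only [wtd] at hw
  rw [Finsupp.le_def]
  intro j
  have h0 : α 0 ≤ l :=
    le_trans (Nat.le_mul_of_pos_left _ hn) (hw ▸ Nat.le_add_right _ _)
  have h1 : α 1 ≤ l :=
    le_trans (Nat.le_mul_of_pos_left _ hm) (hw ▸ Nat.le_add_left _ _)
  fin_cases j <;> simp [Finsupp.single_apply]
  · exact h0
  · exact h1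

lemma exists_poly_of_bounded (F : PS K) (N : ℕ)
    (hb : ∀ α, MvPowerSeries.coeff (R := K) α F ≠ 0 →
      α ≤ Finsupp.single 0 N + Finsupp.single 1 N) :
    ∃ P : MvPolynomial (Fin 2) K, (↑P : PS K) = F := by
  refine ⟨∑ β ∈ Finset.Iic (Finsupp.single 0 N + Finsupp.single 1 N),
    MvPolynomial.monomial β (MvPowerSeries.coeff (R := K) β F), ?_⟩
  ext α
  rw [MvPolynomial.coeff_coe, MvPolynomial.coeff_sum]
  simp only [MvPolynomial.coeff_monomial]
  rw [Finset.sum_ite_eq' (Finset.Iic (Finsupp.single 0 N + Finsupp.single 1 N)) α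
    (fun β => MvPowerSeries.coeff (R := K) β F)]
  split_ifs with h
  · rfl
  · symm
    by_contra hne
    exact h (Finset.mem_Iic.mpr (hb α hne))

lemma finite_support_of_homog {n m l : ℕ} (hn : 0 < n) (hm : 0 < m) {F : PS K}
    (hF : IsWtHomog n m l F) :
    {α : Fin 2 →₀ ℕ | MvPowerSeries.coeff (R := K) α F ≠ 0}.Finite := by
  apply Set.Finite.subset (Finset.Iic (Finsupp.single 0 l + Finsupp.single 1 l)).finite_toSet
  intro α hα
  simpa using homog_bound hn hm hF α hα

/-- `binom * g` has two support points with different `x`-coordinates. -/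
lemma two_support_points {a b : K} (ha : a ≠ 0) (hb : b ≠ 0) {m n : ℕ}
    (hm : 0 < m) (hn : 0 < n) {g : PS K} (hg : g ≠ 0)
    (hfin : {γ : Fin 2 →₀ ℕ | MvPowerSeries.coeff (R := K) γ g ≠ 0}.Finite) :
    ∃ α β : Fin 2 →₀ ℕ,
      MvPowerSeries.coeff (R := K) α (binomPS a b m n * g) ≠ 0 ∧
      MvPowerSeries.coeff (R := K) β (binomPS a b m n * g) ≠ 0 ∧ α 0 < β 0 := by
  classical
  set T := hfin.toFinset with hT
  have hTne : T.Nonempty := by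
    obtain ⟨γ, hγ⟩ := exists_coeff_ne_zero hg
    exact ⟨γ, by simp [hT, hγ]⟩
  obtain ⟨γmin, hγminT, hγmin⟩ := Finset.exists_min_image T (fun γ => γ 0) hTne
  obtain ⟨γmax, hγmaxT, hγmax⟩ := Finset.exists_max_image T (fun γ => γ 0) hTne
  have hmono : (binomPS a b m n : PS K) =
      MvPowerSeries.monomial (R := K) (Finsupp.single 0 m) a -
      MvPowerSeries.monomial (R := K) (Finsupp.single 1 n) b := by
    rw [← binomPoly_coe, binomPoly, MvPolynomial.C_mul_X_pow_eq_monomial,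
      MvPolynomial.C_mul_X_pow_eq_monomial, ← coe_ringHom_eq, map_sub]
    simp [coe_ringHom_eq, MvPolynomial.coe_monomial]
  have hcoeff : ∀ α : Fin 2 →₀ ℕ, MvPowerSeries.coeff (R := K) α (binomPS a b m n * g) =
      (if Finsupp.single 0 m ≤ α then
        a * MvPowerSeries.coeff (R := K) (α - Finsupp.single 0 m) g else 0) -
      (if Finsupp.single 1 n ≤ α then
        b * MvPowerSeries.coeff (R := K) (α - Finsupp.single 1 n) g else 0) := by
    intro α
    rw [hmono, sub_mul, map_sub, MvPowerSeries.coeff_monomial_mul,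
      MvPowerSeries.coeff_monomial_mul]
  have hgmin : MvPowerSeries.coeff (R := K) γmin g ≠ 0 := by
    simpa [hT] using hγminT
  have hgmax : MvPowerSeries.coeff (R := K) γmax g ≠ 0 := by
    simpa [hT] using hγmaxT
  refine ⟨γmin + Finsupp.single 1 n, γmax + Finsupp.single 0 m, ?_, ?_, ?_⟩
  · rw [hcoeff]
    have h2 : Finsupp.single 1 n ≤ γmin + Finsupp.single 1 n := le_add_self
    rw [if_pos h2, add_tsub_cancel_right]
    have h1 : (if Finsupp.single 0 m ≤ γmin + Finsupp.single 1 n then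
        a * MvPowerSeries.coeff (R := K) (γmin + Finsupp.single 1 n - Finsupp.single 0 m) g
        else 0) = 0 := by
      split_ifs with hle
      · have hz : MvPowerSeries.coeff (R := K)
            (γmin + Finsupp.single 1 n - Finsupp.single 0 m) g = 0 := by
          by_contra hnz
          have hmem : (γmin + Finsupp.single 1 n - Finsupp.single 0 m) ∈ T := by
            simp [hT, hnz]
          have := hγmin _ hmem
          have hle0 : m ≤ γmin 0 := by
            have := Finsupp.le_def.mp hle 0
            simpa [Finsupp.single_apply, Finsupp.add_apply] using this
          have hval : ((γmin + Finsupp.single 1 n - Finsupp.single 0 m : Fin 2 →₀ ℕ)) 0 =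
              γmin 0 - m := by
            simp [Finsupp.tsub_apply, Finsupp.add_apply, Finsupp.single_apply]
          omega
        rw [hz, mul_zero]
      · rfl
    rw [h1, zero_sub, neg_ne_zero]
    exact mul_ne_zero hb hgmin
  · rw [hcoeff]
    have h2 : Finsupp.single 0 m ≤ γmax + Finsupp.single 0 m := le_add_self
    rw [if_pos h2, add_tsub_cancel_right]
    have h1 : (if Finsupp.single 1 n ≤ γmax + Finsupp.single 0 m then
        b * MvPowerSeries.coeff (R := K) (γmax + Finsupp.single 0 m - Finsupp.single 1 n) g
        else 0) = 0 := by
      split_ifs with hle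
      · have hz : MvPowerSeries.coeff (R := K)
            (γmax + Finsupp.single 0 m - Finsupp.single 1 n) g = 0 := by
          by_contra hnz
          have hmem : (γmax + Finsupp.single 0 m - Finsupp.single 1 n) ∈ T := by
            simp [hT, hnz]
          have := hγmax _ hmem
          have hval : ((γmax + Finsupp.single 0 m - Finsupp.single 1 n : Fin 2 →₀ ℕ)) 0 =
              γmax 0 + m := by
            simp [Finsupp.tsub_apply, Finsupp.add_apply, Finsupp.single_apply]
          omega
        rw [hz, mul_zero]
      · rfl
    rw [h1, sub_zero]
    exact mul_ne_zero ha hgmax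
  · have hv1 : ((γmin + Finsupp.single 1 n : Fin 2 →₀ ℕ)) 0 = γmin 0 := by
      simp [Finsupp.add_apply, Finsupp.single_apply]
    have hv2 : ((γmax + Finsupp.single 0 m : Fin 2 →₀ ℕ)) 0 = γmax 0 + m := by
      simp [Finsupp.add_apply, Finsupp.single_apply]
    rw [hv1, hv2]
    have := hγmin _ hγmaxT
    omega
end Aux4
section Aux5
variable {K : Type*} [Field K]
open MvPowerSeries

lemma coeff_inFace (f : PS K) (Δ : Set (ℝ × ℝ)) (α : Fin 2 →₀ ℕ) :
    MvPowerSeries.coeff (R := K) α (inFace f Δ) =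
      if rpt α ∈ Δ then MvPowerSeries.coeff (R := K) α f else 0 := rfl

lemma dotp_rpt (n m : ℕ) (α : Fin 2 →₀ ℕ) :
    dotp ((n : ℝ), (m : ℝ)) (rpt α) = (wtd n m α : ℝ) := by
  simp only [dotp, rpt, wtd]
  push_cast
  ring

lemma isLinearMap_dotp (w : ℝ × ℝ) : IsLinearMap ℝ (dotp w) := by
  constructor
  · intro p q
    simp only [dotp, Prod.fst_add, Prod.snd_add]
    ring
  · intro c p
    simp only [dotp, Prod.smul_fst, Prod.smul_snd, smul_eq_mul]
    ring

/-- The face of the Newton polyhedron determined by the weight `(n, m)`. -/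
def faceSet (f : PS K) (n m : ℕ) : Set (ℝ × ℝ) :=
  {q ∈ NewtonPolyhedron f | ∀ p ∈ NewtonPolyhedron f,
    dotp ((n : ℝ), (m : ℝ)) q ≤ dotp ((n : ℝ), (m : ℝ)) p}

section Construction

variable (f : PS K) (n m d : ℕ)

/-- points of the generating set of the Newton polyhedron lie above the diagram -/
lemma genSet_halfspace (hminf : ∀ α, MvPowerSeries.coeff (R := K) α f ≠ 0 → d ≤ wtd n m α) :
    (⋃ p ∈ suppR f, {q : ℝ × ℝ | p.1 ≤ q.1 ∧ p.2 ≤ q.2}) ⊆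
      {q : ℝ × ℝ | (d : ℝ) ≤ dotp ((n : ℝ), (m : ℝ)) q} := by
  intro q hq
  simp only [Set.mem_iUnion, exists_prop] at hq
  obtain ⟨p, hp, hq1, hq2⟩ := hq
  obtain ⟨α, hα, rfl⟩ := hp
  have h1 : ((wtd n m α : ℕ) : ℝ) ≤ dotp ((n : ℝ), (m : ℝ)) q := by
    rw [← dotp_rpt]
    simp only [dotp, rpt] at *
    have e1 : (n : ℝ) * (α 0 : ℝ) ≤ (n : ℝ) * q.1 :=
      mul_le_mul_of_nonneg_left hq1 (by positivity)
    have e2 : (m : ℝ) * (α 1 : ℝ) ≤ (m : ℝ) * q.2 :=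
      mul_le_mul_of_nonneg_left hq2 (by positivity)
    linarith
  refine le_trans ?_ h1
  exact_mod_cast hminf α hα

lemma NP_halfspace (hminf : ∀ α, MvPowerSeries.coeff (R := K) α f ≠ 0 → d ≤ wtd n m α) :
    NewtonPolyhedron f ⊆ {q : ℝ × ℝ | (d : ℝ) ≤ dotp ((n : ℝ), (m : ℝ)) q} :=
  convexHull_min (genSet_halfspace f n m d hminf)
    (convex_halfSpace_ge (isLinearMap_dotp _) _)

lemma mem_NP_of_coeff (α : Fin 2 →₀ ℕ) (h : MvPowerSeries.coeff (R := K) α f ≠ 0) :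
    rpt α ∈ NewtonPolyhedron f := by
  apply subset_convexHull
  simp only [Set.mem_iUnion, exists_prop]
  exact ⟨rpt α, ⟨α, h, rfl⟩, le_refl _, le_refl _⟩

lemma mem_faceSet (hminf : ∀ α, MvPowerSeries.coeff (R := K) α f ≠ 0 → d ≤ wtd n m α)
    (α : Fin 2 →₀ ℕ) (h : MvPowerSeries.coeff (R := K) α f ≠ 0) (hw : wtd n m α = d) :
    rpt α ∈ faceSet f n m := by
  refine ⟨mem_NP_of_coeff f α h, fun p hp => ?_⟩
  rw [dotp_rpt, hw]
  exact NP_halfspace f n m d hminf hp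

lemma faceSet_wt (hminf : ∀ α, MvPowerSeries.coeff (R := K) α f ≠ 0 → d ≤ wtd n m α)
    (α₀ : Fin 2 →₀ ℕ) (h₀ : MvPowerSeries.coeff (R := K) α₀ f ≠ 0) (hw₀ : wtd n m α₀ = d) :
    ∀ q ∈ faceSet f n m, dotp ((n : ℝ), (m : ℝ)) q = (d : ℝ) := by
  rintro q ⟨hq1, hq2⟩
  apply le_antisymm
  · have := hq2 (rpt α₀) (mem_NP_of_coeff f α₀ h₀)
    rwa [dotp_rpt, hw₀] at this
  · exact NP_halfspace f n m d hminf hq1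

lemma faceSet_convex : Convex ℝ (faceSet f n m) := by
  intro x hx y hy s t hs ht hst
  obtain ⟨hx1, hx2⟩ := hx
  obtain ⟨hy1, hy2⟩ := hy
  refine ⟨(convex_convexHull ℝ _) hx1 hy1 hs ht hst, fun p hp => ?_⟩
  have hd : dotp ((n : ℝ), (m : ℝ)) (s • x + t • y) =
      s * dotp ((n : ℝ), (m : ℝ)) x + t * dotp ((n : ℝ), (m : ℝ)) y := by
    simp only [dotp, Prod.fst_add, Prod.snd_add, Prod.smul_fst, Prod.smul_snd, smul_eq_mul]
    ring
  rw [hd]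
  have h1 := hx2 p hp
  have h2 := hy2 p hp
  have e : s * dotp ((n : ℝ), (m : ℝ)) p + t * dotp ((n : ℝ), (m : ℝ)) p =
      dotp ((n : ℝ), (m : ℝ)) p := by
    rw [← add_mul, hst, one_mul]
  linarith [mul_le_mul_of_nonneg_left h1 hs, mul_le_mul_of_nonneg_left h2 ht, e]

end Construction

/-- membership in a segment on the line `n x + m y = d` -/
lemma seg_mem (n m : ℝ) (hm : 0 < m) (d : ℝ) (P Q R : ℝ × ℝ)
    (hP : n * P.1 + m * P.2 = d) (hQ : n * Q.1 + m * Q.2 = d)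
    (hR : n * R.1 + m * R.2 = d)
    (h1 : P.1 ≤ R.1) (h2 : R.1 ≤ Q.1) (hPQ : P.1 < Q.1) :
    R ∈ segment ℝ P Q := by
  set t : ℝ := (R.1 - P.1) / (Q.1 - P.1) with ht
  have hden : Q.1 - P.1 > 0 := by linarith
  have ht0 : 0 ≤ t := div_nonneg (by linarith) (by linarith)
  have ht1 : t ≤ 1 := by
    rw [ht, div_le_one hden]
    linarith
  refine ⟨1 - t, t, by linarith, ht0, by ring, ?_⟩
  have e1 : (1 - t) * P.1 + t * Q.1 = R.1 := by
    have htq : t * (Q.1 - P.1) = R.1 - P.1 := by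
      rw [ht]; exact div_mul_cancel₀ _ (ne_of_gt hden)
    linear_combination htq
  have e2 : (1 - t) * P.2 + t * Q.2 = R.2 := by
    have hm' : m ≠ 0 := ne_of_gt hm
    have : m * ((1 - t) * P.2 + t * Q.2) = m * R.2 := by
      have : m * ((1 - t) * P.2 + t * Q.2) = (1 - t) * (m * P.2) + t * (m * Q.2) := by ring
      rw [this]
      have hP' : m * P.2 = d - n * P.1 := by linarith
      have hQ' : m * Q.2 = d - n * Q.1 := by linarith
      have hR' : m * R.2 = d - n * R.1 := by linarith
      rw [hP', hQ', hR']
      linear_combination (-n) * e1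
    exact mul_left_cancel₀ hm' this
  have : (1 - t) • P + t • Q = ((1 - t) * P.1 + t * Q.1, (1 - t) * P.2 + t * Q.2) := by
    ext <;> simp [Prod.smul_fst, Prod.smul_snd, smul_eq_mul]
  rw [this, e1, e2]

end Aux5
section Aux6
variable {K : Type*} [Field K]
open MvPowerSeries

lemma hminf_of_wtComp {f : PS K} {n m d : ℕ}
    (hmin : ∀ l < d, wtComp n m l f = 0) :
    ∀ α, MvPowerSeries.coeff (R := K) α f ≠ 0 → d ≤ wtd n m α := by
  intro α h
  by_contra hlt
  push_neg at hlt
  have h0 := hmin (wtd n m α) hlt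
  have : MvPowerSeries.coeff (R := K) α (wtComp n m (wtd n m α) f) = 0 := by
    rw [h0, map_zero]
  rw [coeff_wtComp, if_pos rfl] at this
  exact h this

lemma coeff_wtComp_ne_iff {f : PS K} {n m d : ℕ} {γ : Fin 2 →₀ ℕ} :
    MvPowerSeries.coeff (R := K) γ (wtComp n m d f) ≠ 0 ↔
      wtd n m γ = d ∧ MvPowerSeries.coeff (R := K) γ f ≠ 0 := by
  rw [coeff_wtComp]
  split_ifs with h
  · exact ⟨fun h2 => ⟨h, h2⟩, fun h2 => h2.2⟩
  · simp [h]

lemma faceSet_main (f : PS K) (n m d : ℕ) (hn : 0 < n) (hm : 0 < m)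
    (hmin : ∀ l < d, wtComp n m l f = 0) (hne : wtComp n m d f ≠ 0)
    (hfin : {γ : Fin 2 →₀ ℕ | MvPowerSeries.coeff (R := K) γ (wtComp n m d f) ≠ 0}.Finite)
    (htwo : ∃ α β : Fin 2 →₀ ℕ, MvPowerSeries.coeff (R := K) α (wtComp n m d f) ≠ 0 ∧
      MvPowerSeries.coeff (R := K) β (wtComp n m d f) ≠ 0 ∧ α 0 < β 0) :
    IsEdge f (faceSet f n m) ∧ inFace f (faceSet f n m) = wtComp n m d f := by
  classical
  have hminf := hminf_of_wtComp hmin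
  set W : ℝ × ℝ := ((n : ℝ), (m : ℝ)) with hW
  set T := hfin.toFinset with hT
  have hTne : T.Nonempty := by
    obtain ⟨γ, hγ⟩ := exists_coeff_ne_zero hne
    exact ⟨γ, by simp [hT, hγ]⟩
  obtain ⟨αm, hαmT, hαm⟩ := Finset.exists_min_image T (fun γ => γ 0) hTne
  obtain ⟨αM, hαMT, hαM⟩ := Finset.exists_max_image T (fun γ => γ 0) hTne
  have hmem_iff : ∀ γ, γ ∈ T ↔ wtd n m γ = d ∧ MvPowerSeries.coeff (R := K) γ f ≠ 0 := by
    intro γ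
    rw [hT, Set.Finite.mem_toFinset, Set.mem_setOf_eq, coeff_wtComp_ne_iff]
  obtain ⟨hwm, hcm⟩ := (hmem_iff αm).mp hαmT
  obtain ⟨hwM, hcM⟩ := (hmem_iff αM).mp hαMT
  have hlt : αm 0 < αM 0 := by
    obtain ⟨α, β, hα, hβ, hαβ⟩ := htwo
    have h1 : α ∈ T := by simp [hT, hα]
    have h2 : β ∈ T := by simp [hT, hβ]
    have := hαm α h1
    have := hαM β h2
    omega
  have hPm : rpt αm ∈ faceSet f n m := mem_faceSet f n m d hminf αm hcm hwm
  have hPM : rpt αM ∈ faceSet f n m := mem_faceSet f n m d hminf αM hcM hwM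
  have hface : IsFace f (faceSet f n m) := by
    refine ⟨⟨rpt αm, hPm⟩, W, by show (0:ℝ) < (n:ℝ); exact_mod_cast hn, by show (0:ℝ) < (m:ℝ); exact_mod_cast hm, rfl⟩
  have hseg : faceSet f n m = segment ℝ (rpt αm) (rpt αM) := by
    apply Set.Subset.antisymm
    · intro q hq
      have hdq : dotp W q = (d : ℝ) := faceSet_wt f n m d hminf αm hcm hwm q hq
      obtain ⟨hq1, _⟩ := hq
      rw [NewtonPolyhedron, convexHull_eq] at hq1
      obtain ⟨ι, t, w, z, hw0, hw1, hz, hcmq⟩ := hq1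
      have hdS : ∀ j ∈ t, (d : ℝ) ≤ dotp W (z j) := fun j hj =>
        genSet_halfspace f n m d hminf (hz j hj)
      have hdsum : dotp W q = ∑ j ∈ t, w j * dotp W (z j) := by
        rw [← hcmq, Finset.centerMass_eq_of_sum_1 _ _ hw1]
        have h1 : dotp W (∑ j ∈ t, w j • z j) =
            (IsLinearMap.mk' _ (isLinearMap_dotp W)) (∑ j ∈ t, w j • z j) := by
          rw [IsLinearMap.mk'_apply]
        rw [h1, map_sum]
        apply Finset.sum_congr rfl
        intro j _
        rw [LinearMap.map_smul, IsLinearMap.mk'_apply, smul_eq_mul]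
      have hzero : ∑ j ∈ t, w j * (dotp W (z j) - d) = 0 := by
        have : ∑ j ∈ t, w j * (dotp W (z j) - d) =
            (∑ j ∈ t, w j * dotp W (z j)) - (∑ j ∈ t, w j) * d := by
          rw [Finset.sum_mul, ← Finset.sum_sub_distrib]
          apply Finset.sum_congr rfl
          intro j _
          ring
        rw [this, hw1, one_mul, ← hdsum, hdq]
        ring
      have hall := (Finset.sum_eq_zero_iff_of_nonneg (fun j hj =>
        mul_nonneg (hw0 j hj) (by linarith [hdS j hj]))).mp hzero
      have key : ∀ i ∈ t, w i ≠ 0 → z i ∈ segment ℝ (rpt αm) (rpt αM) := by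
        intro i hi hwi
        have hdzi : dotp W (z i) = (d : ℝ) := by
          have := hall i hi
          rcases mul_eq_zero.mp this with h | h
          · exact absurd h hwi
          · linarith
        -- z i lies in the generating set
        have hzi := hz i hi
        simp only [Set.mem_iUnion, exists_prop] at hzi
        obtain ⟨p, hp, hle1, hle2⟩ := hzi
        obtain ⟨γ, hγ, rfl⟩ := hp
        have hdγ : (d : ℝ) ≤ dotp W (rpt γ) := by
          rw [dotp_rpt]
          exact_mod_cast hminf γ hγ
        have e1 : (0 : ℝ) ≤ (n : ℝ) * (z i).1 - (n : ℝ) * (rpt γ).1 := by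
          have : (n : ℝ) * (rpt γ).1 ≤ (n : ℝ) * (z i).1 :=
            mul_le_mul_of_nonneg_left hle1 (by positivity)
          linarith
        have e2 : (0 : ℝ) ≤ (m : ℝ) * (z i).2 - (m : ℝ) * (rpt γ).2 := by
          have : (m : ℝ) * (rpt γ).2 ≤ (m : ℝ) * (z i).2 :=
            mul_le_mul_of_nonneg_left hle2 (by positivity)
          linarith
        have esum : ((n : ℝ) * (z i).1 - (n : ℝ) * (rpt γ).1) +
            ((m : ℝ) * (z i).2 - (m : ℝ) * (rpt γ).2) = dotp W (z i) - dotp W (rpt γ) := by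
          simp only [dotp, hW]
          ring
        have hzsum : dotp W (z i) - dotp W (rpt γ) ≤ 0 := by linarith [hdγ, hdzi.le]
        have hz1 : (z i).1 = (rpt γ).1 := by
          have hn' : (0 : ℝ) < (n : ℝ) := by positivity
          nlinarith [e1, e2, esum, hzsum]
        have hz2 : (z i).2 = (rpt γ).2 := by
          have hm' : (0 : ℝ) < (m : ℝ) := by positivity
          nlinarith [e1, e2, esum, hzsum]
        have hzeq : z i = rpt γ := Prod.ext hz1 hz2
        have hwγ : wtd n m γ = d := by
          have : dotp W (rpt γ) = (d : ℝ) := by rw [← hzeq, hdzi]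
          rw [dotp_rpt] at this
          exact_mod_cast this
        have hγT : γ ∈ T := (hmem_iff γ).mpr ⟨hwγ, hγ⟩
        have hb1 : αm 0 ≤ γ 0 := hαm γ hγT
        have hb2 : γ 0 ≤ αM 0 := hαM γ hγT
        rw [hzeq]
        apply seg_mem (n : ℝ) (m : ℝ) (by positivity) (d : ℝ)
        · rw [show (n : ℝ) * (rpt αm).1 + (m : ℝ) * (rpt αm).2 = dotp W (rpt αm) from rfl,
            dotp_rpt, hwm]
        · rw [show (n : ℝ) * (rpt αM).1 + (m : ℝ) * (rpt αM).2 = dotp W (rpt αM) from rfl,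
            dotp_rpt, hwM]
        · rw [show (n : ℝ) * (rpt γ).1 + (m : ℝ) * (rpt γ).2 = dotp W (rpt γ) from rfl,
            dotp_rpt, hwγ]
        · show ((αm 0 : ℕ) : ℝ) ≤ ((γ 0 : ℕ) : ℝ); exact_mod_cast hb1
        · show ((γ 0 : ℕ) : ℝ) ≤ ((αM 0 : ℕ) : ℝ); exact_mod_cast hb2
        · show ((αm 0 : ℕ) : ℝ) < ((αM 0 : ℕ) : ℝ); exact_mod_cast hlt
      rw [← hcmq, ← Finset.centerMass_filter_ne_zero z]
      apply Convex.centerMass_mem (convex_segment _ _)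
      · intro i hi
        exact hw0 i (Finset.mem_filter.mp hi).1
      · rw [Finset.sum_filter_ne_zero, hw1]
        norm_num
      · intro i hi
        obtain ⟨hit, hwi⟩ := Finset.mem_filter.mp hi
        exact key i hit hwi
    · exact (faceSet_convex f n m).segment_subset hPm hPM
  refine ⟨⟨hface, rpt αm, rpt αM, ?_, hseg⟩, ?_⟩
  · intro h
    have := congrArg Prod.fst h
    simp only [rpt] at this
    have : αm 0 = αM 0 := by exact_mod_cast this
    omega
  · ext α
    rw [coeff_inFace, coeff_wtComp]
    by_cases hc : MvPowerSeries.coeff (R := K) α f = 0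
    · split_ifs <;> simp [hc]
    · by_cases hw : wtd n m α = d
      · rw [if_pos (mem_faceSet f n m d hminf α hc hw), if_pos hw]
      · rw [if_neg, if_neg hw]
        intro hmemf
        apply hw
        have := faceSet_wt f n m d hminf αm hcm hwm (rpt α) hmemf
        rw [dotp_rpt] at this
        exact_mod_cast this
end Aux6
section Aux7
variable {K : Type*} [Field K]
open MvPolynomial

lemma deg_of_sq (a b : K) (ha : a ≠ 0) (hb : b ≠ 0) (m n : ℕ)
    (hm : 0 < m) (hn : 0 < n) (hcop : Nat.Coprime m n) (H : MvPolynomial (Fin 2) K) :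
    ∃ x y : K, x ≠ 0 ∧ y ≠ 0 ∧
      eval (ev2 x y) (binomPoly a b m n ^ 2 * H) = 0 ∧
      eval (ev2 x y) (pderiv 0 (binomPoly a b m n ^ 2 * H)) = 0 ∧
      eval (ev2 x y) (pderiv 1 (binomPoly a b m n ^ 2 * H)) = 0 := by
  obtain ⟨x, y, hx, hy, hxy⟩ := exists_torus_zero a b ha hb m n hm hn hcop
  have hb0 : eval (ev2 x y) (binomPoly a b m n) = 0 := by
    rw [eval_binomPoly]; rw [hxy]; ring
  refine ⟨x, y, hx, hy, ?_, ?_, ?_⟩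
  · rw [map_mul, map_pow, hb0]
    norm_num
  · rw [pderiv_mul, MvPolynomial.pderiv_pow, map_add, map_mul, map_mul, map_mul, map_mul, map_pow,
      map_pow, hb0]
    norm_num
  · rw [pderiv_mul, MvPolynomial.pderiv_pow, map_add, map_mul, map_mul, map_mul, map_mul, map_pow,
      map_pow, hb0]
    norm_num
end Aux7

lemma wnnd_implies_whnnd {K : Type*} [Field K] (f : PS K) : WNND f → WHNND f := by
  intro hwnnd
  rintro ⟨a, b, m, n, d, ha, hb, hm, hn, hcop, hne, hmin, hdvd2, _hdvd1⟩
  obtain ⟨h, hh⟩ := hdvd2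
  have hbh : IsWtHomog n m (n * m + n * m) ((binomPS a b m n : PS K) ^ 2) := by
    rw [sq]
    exact isWtHomog_mul (isWtHomog_binomPS a b) (isWtHomog_binomPS a b)
  have hkey := wtComp_mul_homog n m (n * m + n * m) d (binomPS a b m n ^ 2) h hbh
  rw [← hh, wtComp_wtComp] at hkey
  by_cases hle : n * m + n * m ≤ d
  swap
  · rw [if_neg hle] at hkey
    exact hne hkey
  rw [if_pos hle] at hkey
  set h0 : PS K := wtComp n m (d - (n * m + n * m)) h with hh0
  have hh0homog : IsWtHomog n m (d - (n * m + n * m)) h0 :=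
    isWtHomog_wtComp n m (d - (n * m + n * m)) h
  have hh0ne : h0 ≠ 0 := by
    intro hz
    rw [hz, mul_zero] at hkey
    exact hne hkey
  obtain ⟨H, hH⟩ := exists_poly_of_bounded h0 (d - (n * m + n * m))
    (homog_bound hn hm hh0homog)
  have hg : (binomPS a b m n : PS K) * h0 ≠ 0 :=
    mul_ne_zero (binomPS_ne_zero ha hm) hh0ne
  have hghomog : IsWtHomog n m (n * m + (d - (n * m + n * m)))
      ((binomPS a b m n : PS K) * h0) :=
    isWtHomog_mul (isWtHomog_binomPS a b) hh0homog
  have hgfin := finite_support_of_homog hn hm hghomog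
  have hfact : wtComp n m d f = binomPS a b m n * (binomPS a b m n * h0) := by
    rw [hkey]
    ring
  have htwo : ∃ α β : Fin 2 →₀ ℕ,
      MvPowerSeries.coeff (R := K) α (wtComp n m d f) ≠ 0 ∧
      MvPowerSeries.coeff (R := K) β (wtComp n m d f) ≠ 0 ∧ α 0 < β 0 := by
    rw [hfact]
    exact two_support_points ha hb hm hn hg hgfin
  have hfinD := finite_support_of_homog hn hm (isWtHomog_wtComp n m d f)
  obtain ⟨hedge, hinface⟩ := faceSet_main f n m d hn hm hmin hne hfinD htwo
  apply hwnnd _ hedge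
  have hpoly : inFace f (faceSet f n m) = ↑(binomPoly a b m n ^ 2 * H) := by
    rw [hinface, hkey, ← hH, ← binomPoly_coe a b m n, ← MvPolynomial.coe_pow,
      ← MvPolynomial.coe_mul]
  rw [WDA_iff_poly f _ _ hpoly]
  exact deg_of_sq a b ha hb m n hm hn hcop H
/-- Proposition 3.7: writing `f_E = monomial · ∏ (a_i x^{m_0} - b_i y^{n_0})^{r_i}`, `f` is
weakly non-degenerate along the edge `E` iff all `r_i = 1`, equivalently iff
`s(f_E) = l(E) (= Σ r_i)`. In particular, WNND implies WHNND. -/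
theorem stmt14 (f : PS K) (Δ : Set (ℝ × ℝ)) (hΔ : IsEdge f Δ)
    (m0 n0 : ℕ) (hm0 : 0 < m0) (hn0 : 0 < n0) (hcop : Nat.Coprime m0 n0)
    (sc : ℕ) (a b : Fin sc → K) (r : Fin sc → ℕ)
    (ha : ∀ i, a i ≠ 0) (hb : ∀ i, b i ≠ 0) (hr : ∀ i, 0 < r i)
    (hdist : ∀ i j, i ≠ j → a i * b j ≠ a j * b i)
    (u v : ℕ) (c : K) (hc : c ≠ 0)
    (hfE : inFace f Δ = MvPowerSeries.C (σ := Fin 2) (R := K) c * (MvPowerSeries.X 0) ^ u *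
      (MvPowerSeries.X 1) ^ v * ∏ i, binomPS (a i) (b i) m0 n0 ^ r i) :
    (¬WeaklyDegenerateAlong f Δ ↔ ∀ i, r i = 1) ∧
    (¬WeaklyDegenerateAlong f Δ ↔ sc = ∑ i, r i) ∧
    (WNND f → WHNND f) := by
  have hFcoe : inFace f Δ = ↑(edgePoly a b r m0 n0 u v c) := by
    rw [hfE, edgePoly_coe]
  have hiff := WDA_iff_poly f Δ _ hFcoe
  have main : ¬WeaklyDegenerateAlong f Δ ↔ ∀ i, r i = 1 := by
    constructor
    · intro hnd i
      by_contra hne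
      have h2 : 2 ≤ r i := by have := hr i; omega
      exact hnd (hiff.mpr (deg_of_two_le a b r m0 n0 u v c hm0 hn0 hcop i (ha i) (hb i) h2))
    · intro h1
      rw [hiff]
      exact nondeg_of_all_one a b r m0 n0 u v c hm0 hn0 hcop hc ha hb hdist h1
  have arith : (∀ i, r i = 1) ↔ sc = ∑ i, r i := by
    constructor
    · intro h
      rw [Finset.sum_congr rfl (fun i _ => h i)]
      simp
    · intro h
      by_contra hne
      push_neg at hne
      obtain ⟨i0, hi0⟩ := hne
      have hlt : ∑ _i : Fin sc, (1 : ℕ) < ∑ i, r i := by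
        apply Finset.sum_lt_sum
        · intro i _; exact hr i
        · exact ⟨i0, Finset.mem_univ i0, by have := hr i0; omega⟩
      simp only [Finset.sum_const, Finset.card_univ, Fintype.card_fin, smul_eq_mul,
        mul_one] at hlt
      omega
  exact ⟨main, main.trans arith, wnnd_implies_whnnd f⟩

end
end
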